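/- The Cantor–Lebesgue measure μ (induced by the Cantor function) coincides with the normalized s-dimensional Hausdorff measure restricted to the middle-thirds Cantor set C, where s = log 2 / log 3; in particular 0 < H^s(C) < ∞. -/

import Mathlib

open Set MeasureTheory Filter
open scoped ENNReal NNReal Topology

/-- The Cantor (devil's staircase) function of the middle-thirds Cantor set. -/
noncomputable def cantorFun (x : ℝ) : ℝ :=
  sSup {y | ∃ a : ℕ → ℕ, (∀ n, a n ≤ 1) ∧
    y = ∑' n, (a n : ℝ) / 2 ^ (n + 1) ∧ (∑' n, (2 * a n : ℝ) / 3 ^ (n + 1)) ≤ x}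

namespace Stmt14

noncomputable def gv (a : ℕ → ℕ) : ℝ := ∑' n, (2 * a n : ℝ) / 3 ^ (n + 1)
noncomputable def hv (a : ℕ → ℕ) : ℝ := ∑' n, (a n : ℝ) / 2 ^ (n + 1)

def Sset (x : ℝ) : Set ℝ := {y | ∃ a : ℕ → ℕ, (∀ n, a n ≤ 1) ∧ y = hv a ∧ gv a ≤ x}

lemma cantorFun_eq (x : ℝ) : cantorFun x = sSup (Sset x) := rfl

lemma summable_gv (a : ℕ → ℕ) (ha : ∀ n, a n ≤ 1) :
    Summable (fun n => (2 * a n : ℝ) / 3 ^ (n + 1)) := by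
  apply Summable.of_nonneg_of_le (fun n => by positivity) (fun n => ?_)
    ((summable_geometric_of_lt_one (by norm_num) (by norm_num : (1/3:ℝ) < 1)).mul_left (2/3))
  have h1 : ((a n : ℝ)) ≤ 1 := by exact_mod_cast ha n
  have h2 : (2/3 : ℝ) * (1/3)^n = 2 / 3^(n+1) := by
    rw [pow_succ, div_pow, one_pow]; ring
  rw [h2]
  gcongr
  linarith

lemma summable_hv (a : ℕ → ℕ) (ha : ∀ n, a n ≤ 1) :
    Summable (fun n => (a n : ℝ) / 2 ^ (n + 1)) := by
  apply Summable.of_nonneg_of_le (fun n => by positivity) (fun n => ?_)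
    ((summable_geometric_of_lt_one (by norm_num) (by norm_num : (1/2:ℝ) < 1)).mul_left (1/2))
  have h1 : ((a n : ℝ)) ≤ 1 := by exact_mod_cast ha n
  have h2 : (1/2 : ℝ) * (1/2)^n = 1 / 2^(n+1) := by
    rw [pow_succ, div_pow, one_pow]; ring
  rw [h2]
  gcongr

lemma tsum_two_thirds : ∑' n : ℕ, (2:ℝ) / 3 ^ (n+1) = 1 := by
  have h : ∀ n : ℕ, (2:ℝ) / 3 ^ (n+1) = (2/3) * (1/3)^n := by
    intro n; rw [pow_succ, div_pow, one_pow]; ring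
  rw [tsum_congr h, tsum_mul_left, tsum_geometric_of_lt_one (by norm_num) (by norm_num)]
  norm_num

lemma tsum_halves : ∑' n : ℕ, (1:ℝ) / 2 ^ (n+1) = 1 := by
  have h : ∀ n : ℕ, (1:ℝ) / 2 ^ (n+1) = (1/2) * (1/2)^n := by
    intro n; rw [pow_succ, div_pow, one_pow]; ring
  rw [tsum_congr h, tsum_mul_left, tsum_geometric_of_lt_one (by norm_num) (by norm_num)]
  norm_num

lemma gv_nonneg (a : ℕ → ℕ) : 0 ≤ gv a := tsum_nonneg (fun n => by positivity)
lemma hv_nonneg (a : ℕ → ℕ) : 0 ≤ hv a := tsum_nonneg (fun n => by positivity)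

lemma gv_le_one (a : ℕ → ℕ) (ha : ∀ n, a n ≤ 1) : gv a ≤ 1 := by
  rw [← tsum_two_thirds]
  apply Summable.tsum_le_tsum _ (summable_gv a ha)
  · apply Summable.of_nonneg_of_le (fun n => by positivity) (fun n => le_rfl)
    exact (summable_gv (fun _ => 1) (fun _ => le_rfl)).congr (by intro n; norm_num)
  · intro n
    have h1 : ((a n : ℝ)) ≤ 1 := by exact_mod_cast ha n
    gcongr
    linarith

lemma hv_le_one (a : ℕ → ℕ) (ha : ∀ n, a n ≤ 1) : hv a ≤ 1 := by
  rw [← tsum_halves]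
  apply Summable.tsum_le_tsum _ (summable_hv a ha)
  · exact (summable_hv (fun _ => 1) (fun _ => le_rfl)).congr (by intro n; norm_num)
  · intro n
    have h1 : ((a n : ℝ)) ≤ 1 := by exact_mod_cast ha n
    gcongr

lemma gv_shift (a : ℕ → ℕ) (ha : ∀ n, a n ≤ 1) :
    gv a = (2 * a 0 + gv (fun n => a (n+1))) / 3 := by
  have hs := summable_gv a ha
  have h0 : gv a = (2 * a 0 : ℝ) / 3 + ∑' n, (2 * a (n+1) : ℝ) / 3 ^ (n+2) := by
    rw [gv, Summable.tsum_eq_zero_add hs]; norm_num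
  have h1 : ∀ n : ℕ, (2 * a (n+1) : ℝ) / 3 ^ (n+2) = ((2 * a (n+1) : ℝ) / 3 ^ (n+1)) * (1/3) := by
    intro n; rw [pow_succ]; ring
  rw [h0, tsum_congr h1, tsum_mul_right]
  rw [gv]; ring

lemma hv_shift (a : ℕ → ℕ) (ha : ∀ n, a n ≤ 1) :
    hv a = ((a 0 : ℝ) + hv (fun n => a (n+1))) / 2 := by
  have hs := summable_hv a ha
  have h0 : hv a = (a 0 : ℝ) / 2 + ∑' n, (a (n+1) : ℝ) / 2 ^ (n+2) := by
    rw [hv, Summable.tsum_eq_zero_add hs]; norm_num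
  have h1 : ∀ n : ℕ, (a (n+1) : ℝ) / 2 ^ (n+2) = ((a (n+1) : ℝ) / 2 ^ (n+1)) * (1/2) := by
    intro n; rw [pow_succ]; ring
  rw [h0, tsum_congr h1, tsum_mul_right]
  rw [hv]; ring

/-- prepend a digit -/
def dcons (b : ℕ) (a : ℕ → ℕ) : ℕ → ℕ := fun n => Nat.casesOn n b a

lemma dcons_le (b : ℕ) (a : ℕ → ℕ) (hb : b ≤ 1) (ha : ∀ n, a n ≤ 1) :
    ∀ n, dcons b a n ≤ 1 := by
  intro n; cases n with
  | zero => exact hb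
  | succ k => exact ha k

lemma gv_dcons (b : ℕ) (a : ℕ → ℕ) (hb : b ≤ 1) (ha : ∀ n, a n ≤ 1) :
    gv (dcons b a) = (2 * b + gv a) / 3 := by
  have := gv_shift (dcons b a) (dcons_le b a hb ha)
  simpa [dcons] using this

lemma hv_dcons (b : ℕ) (a : ℕ → ℕ) (hb : b ≤ 1) (ha : ∀ n, a n ≤ 1) :
    hv (dcons b a) = ((b : ℝ) + hv a) / 2 := by
  have := hv_shift (dcons b a) (dcons_le b a hb ha)
  simpa [dcons] using this

lemma zero_mem_Sset {x : ℝ} (hx : 0 ≤ x) : (0:ℝ) ∈ Sset x := by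
  refine ⟨fun _ => 0, fun _ => by norm_num, ?_, ?_⟩
  · simp [hv]
  · simpa [gv] using hx

lemma Sset_bddAbove (x : ℝ) : BddAbove (Sset x) := by
  refine ⟨1, fun y hy => ?_⟩
  obtain ⟨a, ha, rfl, -⟩ := hy
  exact hv_le_one a ha

lemma cantorFun_nonneg {x : ℝ} (hx : 0 ≤ x) : 0 ≤ cantorFun x :=
  le_csSup (Sset_bddAbove x) (zero_mem_Sset hx)

lemma cantorFun_le_one (x : ℝ) : cantorFun x ≤ 1 := by
  rw [cantorFun_eq]
  apply Real.sSup_le _ zero_le_one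
  rintro y ⟨a, ha, rfl, -⟩
  exact hv_le_one a ha

lemma cantorFun_mono {x y : ℝ} (h0 : 0 ≤ x) (hxy : x ≤ y) : cantorFun x ≤ cantorFun y := by
  rw [cantorFun_eq, cantorFun_eq]
  apply csSup_le_csSup (Sset_bddAbove y) ⟨0, zero_mem_Sset h0⟩
  rintro z ⟨a, ha, rfl, hg⟩
  exact ⟨a, ha, rfl, hg.trans hxy⟩

lemma cantorFun_zero : cantorFun 0 = 0 := by
  rw [cantorFun_eq]
  apply le_antisymm (Real.sSup_le _ le_rfl)
    (le_csSup (Sset_bddAbove 0) (zero_mem_Sset le_rfl))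
  rintro y ⟨a, ha, rfl, hg⟩
  have hz : ∀ n, a n = 0 := by
    intro n
    by_contra h
    have h1 : 1 ≤ a n := Nat.one_le_iff_ne_zero.2 h
    have h2 : (0:ℝ) < (2 * a n : ℝ) / 3 ^ (n+1) := by
      have : (1:ℝ) ≤ (a n : ℝ) := by exact_mod_cast h1
      positivity
    have h3 : (2 * a n : ℝ) / 3 ^ (n+1) ≤ gv a :=
      Summable.le_tsum (summable_gv a ha) n (fun m _ => by positivity)
    linarith
  have : hv a = 0 := by
    rw [hv]
    rw [tsum_congr (fun n => by rw [hz n]; norm_num : ∀ n:ℕ, ((a n:ℝ))/2^(n+1) = 0)]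
    exact tsum_zero
  linarith [this.ge, this.le]

lemma cantorFun_one : cantorFun 1 = 1 := by
  refine le_antisymm (cantorFun_le_one 1) ?_
  rw [cantorFun_eq]
  have h1 : hv (fun _ => 1) = 1 := by
    rw [hv]; simpa using tsum_halves
  have h2 : gv (fun _ => 1) = 1 := by
    rw [gv]; simpa using tsum_two_thirds
  have : (1:ℝ) ∈ Sset 1 := ⟨fun _ => 1, fun _ => le_rfl, h1.symm, h2.le⟩
  exact le_csSup (Sset_bddAbove 1) this

lemma cantorFun_third {x : ℝ} (h0 : 0 ≤ x) (h1 : x ≤ 1) :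
    cantorFun (x/3) = cantorFun x / 2 := by
  have hx3 : (0:ℝ) ≤ x/3 := by linarith
  rw [cantorFun_eq, cantorFun_eq]
  have hnn0 : (0:ℝ) ≤ sSup (Sset x) := le_csSup (Sset_bddAbove x) (zero_mem_Sset h0)
  apply le_antisymm
  · apply Real.sSup_le _ (by linarith)
    rintro y ⟨a, ha, rfl, hg⟩
    have ha0 : a 0 = 0 := by
      by_contra h
      have h1' : (1:ℝ) ≤ (a 0 : ℝ) := by exact_mod_cast Nat.one_le_iff_ne_zero.2 h
      have hs := gv_shift a ha
      have hnn := gv_nonneg (fun n => a (n+1))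
      have : (2:ℝ)/3 ≤ gv a := by rw [hs]; linarith
      linarith
    have hsd : ∀ n, a (n+1) ≤ 1 := fun n => ha (n+1)
    have hgs : gv (fun n => a (n+1)) ≤ x := by
      have hs := gv_shift a ha
      rw [ha0] at hs; push_cast at hs; linarith
    have hmem : hv (fun n => a (n+1)) ∈ Sset x := ⟨_, hsd, rfl, hgs⟩
    have hle := le_csSup (Sset_bddAbove x) hmem
    have hh : hv a = hv (fun n => a (n+1)) / 2 := by
      have := hv_shift a ha; rw [ha0] at this; push_cast at this; linarith
    rw [hh]; linarith
  · rw [div_le_iff₀ (by norm_num : (0:ℝ) < 2)]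
    have hnn : (0:ℝ) ≤ sSup (Sset (x/3)) := le_csSup (Sset_bddAbove _) (zero_mem_Sset hx3)
    apply Real.sSup_le _ (by linarith)
    rintro y ⟨a, ha, rfl, hg⟩
    have hb := dcons_le 0 a (by norm_num) ha
    have hgb : gv (dcons 0 a) ≤ x/3 := by
      rw [gv_dcons 0 a (by norm_num) ha]; push_cast; linarith
    have hmem : hv (dcons 0 a) ∈ Sset (x/3) := ⟨_, hb, rfl, hgb⟩
    have hle := le_csSup (Sset_bddAbove (x/3)) hmem
    have hh : hv (dcons 0 a) = hv a / 2 := by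
      rw [hv_dcons 0 a (by norm_num) ha]; push_cast; ring
    rw [hh] at hle; linarith

lemma cantorFun_twothird {x : ℝ} (h0 : 0 ≤ x) (h1 : x ≤ 1) :
    cantorFun ((2+x)/3) = (1 + cantorFun x) / 2 := by
  have hx3 : (0:ℝ) ≤ (2+x)/3 := by linarith
  have hfx : 0 ≤ cantorFun x := cantorFun_nonneg h0
  rw [cantorFun_eq, cantorFun_eq]
  have hnn0 : (0:ℝ) ≤ sSup (Sset x) := le_csSup (Sset_bddAbove x) (zero_mem_Sset h0)
  apply le_antisymm
  · apply Real.sSup_le _ (by linarith)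
    rintro y ⟨a, ha, rfl, hg⟩
    rcases Nat.le_one_iff_eq_zero_or_eq_one.1 (ha 0) with ha0 | ha0
    · have hh : hv a = hv (fun n => a (n+1)) / 2 := by
        have := hv_shift a ha; rw [ha0] at this; push_cast at this; linarith
      have := hv_le_one (fun n => a (n+1)) (fun n => ha (n+1))
      rw [hh]; linarith
    · have hsd : ∀ n, a (n+1) ≤ 1 := fun n => ha (n+1)
      have hgs : gv (fun n => a (n+1)) ≤ x := by
        have hs := gv_shift a ha; rw [ha0] at hs; push_cast at hs; linarith
      have hmem : hv (fun n => a (n+1)) ∈ Sset x := ⟨_, hsd, rfl, hgs⟩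
      have hle := le_csSup (Sset_bddAbove x) hmem
      have hh : hv a = (1 + hv (fun n => a (n+1))) / 2 := by
        have := hv_shift a ha; rw [ha0] at this; push_cast at this; linarith
      rw [hh]; linarith
  · have hhalf : (1:ℝ)/2 ≤ sSup (Sset ((2+x)/3)) := by
      have hb := dcons_le 1 (fun _ => 0) (le_rfl) (fun _ => by norm_num)
      have hg0 : gv (fun _ : ℕ => 0) = 0 := by
        have h := gv_shift (fun _ : ℕ => 0) (fun _ => by norm_num)
        have h2 := gv_nonneg (fun _ : ℕ => 0)
        push_cast at h; linarith
      have hh0 : hv (fun _ : ℕ => 0) = 0 := by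
        have h := hv_shift (fun _ : ℕ => 0) (fun _ => by norm_num)
        have h2 := hv_nonneg (fun _ : ℕ => 0)
        push_cast at h; linarith
      have hgb : gv (dcons 1 (fun _ => 0)) ≤ (2+x)/3 := by
        rw [gv_dcons 1 (fun _ => 0) le_rfl (fun _ => by norm_num), hg0]
        push_cast; linarith
      have hmem : hv (dcons 1 (fun _ => 0)) ∈ Sset ((2+x)/3) := ⟨_, hb, rfl, hgb⟩
      have hle := le_csSup (Sset_bddAbove _) hmem
      rw [hv_dcons 1 (fun _ => 0) le_rfl (fun _ => by norm_num), hh0] at hle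
      push_cast at hle; linarith
    rw [div_le_iff₀ (by norm_num : (0:ℝ) < 2)]
    have key : sSup (Sset x) ≤ 2 * sSup (Sset ((2+x)/3)) - 1 := by
      apply Real.sSup_le _ (by linarith)
      rintro y ⟨a, ha, rfl, hg⟩
      have hb := dcons_le 1 a le_rfl ha
      have hgb : gv (dcons 1 a) ≤ (2+x)/3 := by
        rw [gv_dcons 1 a le_rfl ha]; push_cast; linarith
      have hmem : hv (dcons 1 a) ∈ Sset ((2+x)/3) := ⟨_, hb, rfl, hgb⟩
      have hle := le_csSup (Sset_bddAbove _) hmem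
      rw [hv_dcons 1 a le_rfl ha] at hle
      push_cast at hle; linarith
    linarith

noncomputable def sc : ℝ := Real.log 2 / Real.log 3

lemma sc_pos : 0 < sc := div_pos (Real.log_pos one_lt_two) (Real.log_pos (by norm_num))

lemma sc_le_one : sc ≤ 1 := by
  rw [sc, div_le_one (Real.log_pos (by norm_num))]
  exact Real.log_le_log (by norm_num) (by norm_num)

lemma three_rpow : (3:ℝ) ^ sc = 2 := by
  have h3 : Real.log 3 ≠ 0 := ne_of_gt (Real.log_pos (by norm_num))
  rw [sc, Real.rpow_def_of_pos (by norm_num)]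
  rw [show Real.log 3 * (Real.log 2 / Real.log 3) = Real.log 2 by field_simp]
  exact Real.exp_log (by norm_num)

lemma third_rpow : (3:ℝ)⁻¹ ^ sc = 2⁻¹ := by
  rw [Real.inv_rpow (by norm_num), three_rpow]

lemma pow_third_rpow (n : ℕ) : ((3:ℝ)⁻¹^n) ^ sc = (2:ℝ)⁻¹^n := by
  rw [← Real.rpow_natCast (3⁻¹:ℝ) n, ← Real.rpow_mul (by norm_num : (0:ℝ) ≤ 3⁻¹),
    mul_comm, Real.rpow_mul (by norm_num : (0:ℝ) ≤ 3⁻¹), third_rpow, Real.rpow_natCast]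

lemma f13 : cantorFun (1/3) = 1/2 := by
  have h := cantorFun_third (x := 1) zero_le_one le_rfl
  rw [cantorFun_one] at h
  exact h

lemma f23 : cantorFun (2/3) = 1/2 := by
  have h := cantorFun_twothird (x := 0) le_rfl zero_le_one
  rw [cantorFun_zero] at h
  norm_num at h
  exact h

lemma cantorFun_hold : ∀ n : ℕ, ∀ a b : ℝ, 0 ≤ a → a ≤ b → b ≤ 1 →
    b - a ≤ (3:ℝ)⁻¹^n → cantorFun b - cantorFun a ≤ 2 * (2:ℝ)⁻¹^n := by
  intro n
  induction n with
  | zero =>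
    intro a b h0 hab h1 hd
    have := cantorFun_le_one b
    have := cantorFun_nonneg h0
    norm_num; linarith
  | succ n IH =>
    have e1 : (3:ℝ)⁻¹^(n+1) = 3⁻¹^n/3 := by rw [pow_succ]; ring
    have e2 : (2:ℝ)⁻¹^(n+1) = 2⁻¹^n/2 := by rw [pow_succ]; ring
    have K1 : ∀ u v : ℝ, 0 ≤ u → u ≤ v → v ≤ 1/3 → v - u ≤ (3:ℝ)⁻¹^(n+1) →
        cantorFun v - cantorFun u ≤ 2 * (2:ℝ)⁻¹^(n+1) := by
      intro u v hu huv hv hd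
      have h3u : cantorFun u = cantorFun (3*u) / 2 := by
        have h := cantorFun_third (x := 3*u) (by linarith) (by linarith)
        rw [show (3*u)/3 = u by ring] at h; rw [h]
      have h3v : cantorFun v = cantorFun (3*v) / 2 := by
        have h := cantorFun_third (x := 3*v) (by linarith) (by linarith)
        rw [show (3*v)/3 = v by ring] at h; rw [h]
      have hih := IH (3*u) (3*v) (by linarith) (by linarith) (by linarith)
        (by rw [e1] at hd; linarith)
      rw [h3u, h3v, e2]; linarith
    have K2 : ∀ u v : ℝ, 2/3 ≤ u → u ≤ v → v ≤ 1 → v - u ≤ (3:ℝ)⁻¹^(n+1) →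
        cantorFun v - cantorFun u ≤ 2 * (2:ℝ)⁻¹^(n+1) := by
      intro u v hu huv hv hd
      have h3u : cantorFun u = (1 + cantorFun (3*u - 2)) / 2 := by
        have h := cantorFun_twothird (x := 3*u - 2) (by linarith) (by linarith)
        rw [show (2+(3*u-2))/3 = u by ring] at h; rw [h]
      have h3v : cantorFun v = (1 + cantorFun (3*v - 2)) / 2 := by
        have h := cantorFun_twothird (x := 3*v - 2) (by linarith) (by linarith)
        rw [show (2+(3*v-2))/3 = v by ring] at h; rw [h]
      have hih := IH (3*u - 2) (3*v - 2) (by linarith) (by linarith) (by linarith)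
        (by rw [e1] at hd; linarith)
      rw [h3u, h3v, e2]; linarith
    intro a b h0 hab h1 hd
    have hpow : (3:ℝ)⁻¹^(n+1) ≤ 1/3 := by
      calc (3:ℝ)⁻¹^(n+1) ≤ 3⁻¹^1 :=
        pow_le_pow_of_le_one (by norm_num) (by norm_num) (by omega)
      _ = 1/3 := by norm_num
    rcases le_or_gt b (1/3) with hb | hb
    · exact K1 a b h0 hab hb hd
    rcases le_or_gt (2/3) a with ha2 | ha2
    · exact K2 a b ha2 hab h1 hd
    rcases le_or_gt a (1/3) with ha1 | ha1
    · have hble : b ≤ 2/3 := by linarith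
      have h5 : cantorFun b ≤ 1/2 := by rw [← f23]; exact cantorFun_mono (by linarith) hble
      have h6 := K1 a (1/3) h0 ha1 le_rfl (by linarith)
      rw [f13] at h6; linarith
    · have hfa : 1/2 ≤ cantorFun a := by rw [← f13]; exact cantorFun_mono (by norm_num) ha1.le
      rcases le_or_gt b (2/3) with hb2 | hb2
      · have h5 : cantorFun b ≤ 1/2 := by rw [← f23]; exact cantorFun_mono (by linarith) hb2
        have hp : (0:ℝ) < 2 * 2⁻¹^(n+1) := by positivity
        linarith
      · have h6 := K2 (2/3) b le_rfl (by linarith) h1 (by linarith)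
        rw [f23] at h6; linarith

lemma cantorFun_holder {a b : ℝ} (h0 : 0 ≤ a) (hab : a ≤ b) (h1 : b ≤ 1) :
    cantorFun b - cantorFun a ≤ 4 * (b - a) ^ sc := by
  rcases eq_or_lt_of_le hab with rfl | hlt
  · have h := Real.rpow_nonneg (le_of_eq (sub_self a).symm) sc
    linarith
  · have hba : 0 < b - a := by linarith
    have hba1 : b - a ≤ 1 := by linarith
    have hex : ∃ n : ℕ, (3:ℝ)⁻¹^n < b - a := exists_pow_lt_of_lt_one hba (by norm_num)
    classical
    set n := Nat.find hex with hn
    have hlt' : (3:ℝ)⁻¹^n < b - a := Nat.find_spec hex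
    have hnpos : n ≠ 0 := by
      intro h
      rw [h] at hlt'
      norm_num at hlt'
      linarith
    obtain ⟨m, hm⟩ : ∃ m, n = m + 1 := ⟨n - 1, by omega⟩
    rw [hm] at hlt'
    have hmin : ¬ ((3:ℝ)⁻¹^m < b - a) := Nat.find_min hex (by omega)
    push_neg at hmin
    have hh := cantorFun_hold m a b h0 hab h1 hmin
    have hr : (2:ℝ)⁻¹^(m+1) ≤ (b - a) ^ sc := by
      have := Real.rpow_le_rpow (by positivity) hlt'.le sc_pos.le
      rwa [pow_third_rpow] at this
    have e2 : (2:ℝ)⁻¹^(m+1) = 2⁻¹^m/2 := by rw [pow_succ]; ring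
    rw [e2] at hr
    linarith

noncomputable def wE {n : ℕ} (w : Fin n → Bool) : ℝ :=
  ∑ i : Fin n, (cond (w i) 2 0 : ℝ) / 3 ^ (i.1 + 1)
noncomputable def wV {n : ℕ} (w : Fin n → Bool) : ℝ :=
  ∑ i : Fin n, (cond (w i) 1 0 : ℝ) / 2 ^ (i.1 + 1)

lemma wE_zero (w : Fin 0 → Bool) : wE w = 0 := by simp [wE]
lemma wV_zero (w : Fin 0 → Bool) : wV w = 0 := by simp [wV]

lemma wE_cons {n : ℕ} (b : Bool) (w : Fin n → Bool) :
    wE (Fin.cons b w) = ((cond b 2 0 : ℝ) + wE w) / 3 := by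
  rw [wE, Fin.sum_univ_succ]
  simp only [Fin.cons_zero, Fin.cons_succ]
  have h : ∀ i : Fin n,
      (cond (w i) 2 0 : ℝ) / 3 ^ ((i.succ : Fin (n+1)).1 + 1)
        = ((cond (w i) 2 0 : ℝ) / 3 ^ (i.1 + 1)) / 3 := by
    intro i; rw [Fin.val_succ, pow_succ]; ring
  rw [Finset.sum_congr rfl (fun i _ => h i), ← Finset.sum_div, ← wE]
  norm_num; ring

lemma wV_cons {n : ℕ} (b : Bool) (w : Fin n → Bool) :
    wV (Fin.cons b w) = ((cond b 1 0 : ℝ) + wV w) / 2 := by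
  rw [wV, Fin.sum_univ_succ]
  simp only [Fin.cons_zero, Fin.cons_succ]
  have h : ∀ i : Fin n,
      (cond (w i) 1 0 : ℝ) / 2 ^ ((i.succ : Fin (n+1)).1 + 1)
        = ((cond (w i) 1 0 : ℝ) / 2 ^ (i.1 + 1)) / 2 := by
    intro i; rw [Fin.val_succ, pow_succ]; ring
  rw [Finset.sum_congr rfl (fun i _ => h i), ← Finset.sum_div, ← wV]
  norm_num; ring

lemma wE_nonneg {n : ℕ} (w : Fin n → Bool) : 0 ≤ wE w :=
  Finset.sum_nonneg fun i _ => by cases (w i) <;> simp <;> positivity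

lemma wV_nonneg {n : ℕ} (w : Fin n → Bool) : 0 ≤ wV w :=
  Finset.sum_nonneg fun i _ => by cases (w i) <;> simp <;> positivity

lemma wE_add_le_one : ∀ {n : ℕ} (w : Fin n → Bool), wE w + (3:ℝ)⁻¹^n ≤ 1 := by
  intro n
  induction n with
  | zero => intro w; rw [wE_zero]; norm_num
  | succ n IH =>
    intro w
    rw [← Fin.cons_self_tail w, wE_cons]
    have h := IH (Fin.tail w)
    have e1 : (3:ℝ)⁻¹^(n+1) = 3⁻¹^n/3 := by rw [pow_succ]; ring
    cases (w 0) <;> simp only [Bool.cond_true, Bool.cond_false] <;> rw [e1] <;> linarith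

lemma wV_add_le_one : ∀ {n : ℕ} (w : Fin n → Bool), wV w + (2:ℝ)⁻¹^n ≤ 1 := by
  intro n
  induction n with
  | zero => intro w; rw [wV_zero]; norm_num
  | succ n IH =>
    intro w
    rw [← Fin.cons_self_tail w, wV_cons]
    have h := IH (Fin.tail w)
    have e1 : (2:ℝ)⁻¹^(n+1) = 2⁻¹^n/2 := by rw [pow_succ]; ring
    cases (w 0) <;> simp only [Bool.cond_true, Bool.cond_false] <;> rw [e1] <;> linarith

lemma cantorFun_wE : ∀ {n : ℕ} (w : Fin n → Bool),
    cantorFun (wE w) = wV w ∧ cantorFun (wE w + (3:ℝ)⁻¹^n) = wV w + (2:ℝ)⁻¹^n := by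
  intro n
  induction n with
  | zero =>
    intro w
    rw [wE_zero, wV_zero]
    norm_num [cantorFun_zero, cantorFun_one]
  | succ n IH =>
    intro w
    rw [← Fin.cons_self_tail w, wE_cons, wV_cons]
    set u := wE (Fin.tail w) with hu
    have hu0 : 0 ≤ u := wE_nonneg _
    have hu1 : u + (3:ℝ)⁻¹^n ≤ 1 := wE_add_le_one _
    have hp : (0:ℝ) < 3⁻¹^n := by positivity
    obtain ⟨ih1, ih2⟩ := IH (Fin.tail w)
    have e1 : (3:ℝ)⁻¹^(n+1) = 3⁻¹^n/3 := by rw [pow_succ]; ring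
    have e2 : (2:ℝ)⁻¹^(n+1) = 2⁻¹^n/2 := by rw [pow_succ]; ring
    cases hw : (w 0) <;> simp only [Bool.cond_true, Bool.cond_false]
    · constructor
      · have h := cantorFun_third (x := u) hu0 (by linarith)
        rw [show ((0:ℝ) + u)/3 = u/3 by ring, h, ih1]
        try ring
      · have h := cantorFun_third (x := u + 3⁻¹^n) (by linarith) hu1
        rw [show ((0:ℝ) + u)/3 + 3⁻¹^(n+1) = (u + 3⁻¹^n)/3 by rw [e1]; ring, h, ih2, e2]
        try ring
    · constructor
      · have h := cantorFun_twothird (x := u) hu0 (by linarith)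
        rw [show ((2:ℝ) + u)/3 = (2+u)/3 by ring, h, ih1]
        try ring
      · have h := cantorFun_twothird (x := u + 3⁻¹^n) (by linarith) hu1
        rw [show ((2:ℝ) + u)/3 + 3⁻¹^(n+1) = (2 + (u + 3⁻¹^n))/3 by rw [e1]; ring, h, ih2, e2]
        try ring

lemma image_third_Icc (a b : ℝ) : (· / 3) '' Icc a b = Icc (a/3) (b/3) := by
  have hfun : (fun x : ℝ => x/3) = (· * (3⁻¹ : ℝ)) := funext fun x => div_eq_mul_inv x 3
  rw [hfun, image_mul_right_Icc' a b (by norm_num)]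
  norm_num [div_eq_mul_inv]

lemma image_twothird_Icc (a b : ℝ) :
    (fun x : ℝ => (2 + x) / 3) '' Icc a b = Icc ((2+a)/3) ((2+b)/3) := by
  have hfun : (fun x : ℝ => (2+x)/3) = (· * (3⁻¹ : ℝ)) ∘ (fun x : ℝ => 2 + x) :=
    funext fun x => by simp [Function.comp, div_eq_mul_inv]
  rw [hfun, image_comp, image_const_add_Icc, image_mul_right_Icc' _ _ (by norm_num : (0:ℝ) < 3⁻¹)]
  norm_num [div_eq_mul_inv]

lemma pre_eq : ∀ n : ℕ, preCantorSet n = ⋃ w : Fin n → Bool, Icc (wE w) (wE w + (3:ℝ)⁻¹^n) := by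
  intro n
  induction n with
  | zero =>
    rw [preCantorSet_zero]
    apply Subset.antisymm
    · intro x hx
      exact mem_iUnion.2 ⟨fun i => i.elim0, by simpa [wE_zero] using hx⟩
    · apply iUnion_subset
      intro w
      rw [wE_zero]
      norm_num
  | succ n IH =>
    rw [preCantorSet_succ, IH, image_iUnion, image_iUnion]
    apply Subset.antisymm
    · apply union_subset <;> apply iUnion_subset <;> intro w
      · rw [image_third_Icc]
        apply subset_iUnion_of_subset (Fin.cons false w)
        rw [wE_cons]
        apply Icc_subset_Icc
        · simp only [Bool.cond_true, Bool.cond_false]; linarith [wE_nonneg w]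
        · simp only [Bool.cond_true, Bool.cond_false]
          have : (3:ℝ)⁻¹^(n+1) = 3⁻¹^n/3 := by rw [pow_succ]; ring
          rw [this]; linarith
      · rw [image_twothird_Icc]
        apply subset_iUnion_of_subset (Fin.cons true w)
        rw [wE_cons]
        apply Icc_subset_Icc
        · simp only [Bool.cond_true, Bool.cond_false]; linarith
        · simp only [Bool.cond_true, Bool.cond_false]
          have : (3:ℝ)⁻¹^(n+1) = 3⁻¹^n/3 := by rw [pow_succ]; ring
          rw [this]; linarith
    · apply iUnion_subset
      intro w
      cases hw : (w 0)
      · apply subset_union_of_subset_left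
        apply subset_iUnion_of_subset (Fin.tail w)
        rw [image_third_Icc]
        conv_lhs => rw [← Fin.cons_self_tail w]
        rw [wE_cons, hw]
        apply Icc_subset_Icc
        · simp only [Bool.cond_true, Bool.cond_false]; linarith [wE_nonneg (Fin.tail w)]
        · simp only [Bool.cond_true, Bool.cond_false]
          have : (3:ℝ)⁻¹^(n+1) = 3⁻¹^n/3 := by rw [pow_succ]; ring
          rw [this]; linarith
      · apply subset_union_of_subset_right
        apply subset_iUnion_of_subset (Fin.tail w)
        rw [image_twothird_Icc]
        conv_lhs => rw [← Fin.cons_self_tail w]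
        rw [wE_cons, hw]
        apply Icc_subset_Icc
        · simp only [Bool.cond_true, Bool.cond_false]; linarith [wE_nonneg (Fin.tail w)]
        · simp only [Bool.cond_true, Bool.cond_false]
          have : (3:ℝ)⁻¹^(n+1) = 3⁻¹^n/3 := by rw [pow_succ]; ring
          rw [this]; linarith

lemma pre_antitone : Antitone preCantorSet := by
  apply antitone_nat_of_succ_le
  intro n
  induction n with
  | zero =>
    rw [preCantorSet_succ, preCantorSet_zero]
    apply union_subset
    · rintro x ⟨y, hy, rfl⟩
      simp only [mem_Icc] at hy ⊢
      obtain ⟨h1, h2⟩ := hy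
      constructor <;> linarith
    · rintro x ⟨y, hy, rfl⟩
      simp only [mem_Icc] at hy ⊢
      obtain ⟨h1, h2⟩ := hy
      constructor <;> linarith
  | succ n IH =>
    rw [preCantorSet_succ, preCantorSet_succ]
    exact union_subset_union (image_mono IH) (image_mono IH)

lemma third_mem_cantorSet {x : ℝ} (hx : x ∈ cantorSet) : x/3 ∈ cantorSet := by
  have hx01 := cantorSet_subset_unitInterval hx
  rw [cantorSet, mem_iInter] at hx ⊢
  intro n
  cases n with
  | zero =>
    rw [preCantorSet_zero]
    obtain ⟨h1, h2⟩ := hx01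
    constructor <;> linarith
  | succ n => exact Or.inl ⟨x, hx n, rfl⟩

lemma twothird_mem_cantorSet {x : ℝ} (hx : x ∈ cantorSet) : (2+x)/3 ∈ cantorSet := by
  have hx01 := cantorSet_subset_unitInterval hx
  rw [cantorSet, mem_iInter] at hx ⊢
  intro n
  cases n with
  | zero =>
    rw [preCantorSet_zero]
    obtain ⟨h1, h2⟩ := hx01
    constructor <;> linarith
  | succ n => exact Or.inr ⟨x, hx n, rfl⟩

lemma cantorSet_eq_union :
    cantorSet = (· / 3) '' cantorSet ∪ (fun x => (2 + x) / 3) '' cantorSet := by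
  apply Subset.antisymm
  · intro x hx
    have hx01 := cantorSet_subset_unitInterval hx
    have hx1 : x ∈ preCantorSet 1 := (mem_iInter.1 hx) 1
    rw [preCantorSet_succ, preCantorSet_zero] at hx1
    rcases hx1 with ⟨y, hy, rfl⟩ | ⟨y, hy, rfl⟩
    · -- x = y/3 ≤ 1/3 ; show 3x ∈ cantorSet
      left
      refine ⟨y/3*3, ?_, by ring⟩
      rw [cantorSet, mem_iInter]
      intro n
      have hxn : y/3 ∈ preCantorSet (n+1) := (mem_iInter.1 hx) (n+1)
      rw [preCantorSet_succ] at hxn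
      rcases hxn with ⟨z, hz, hz2⟩ | ⟨z, hz, hz2⟩
      · have hz2' : z/3 = y/3 := hz2
        have : y/3*3 = z := by rw [← hz2']; ring
        rwa [this]
      · exfalso
        have hz01 : z ∈ Icc (0:ℝ) 1 := pre_antitone (Nat.zero_le n) hz
        obtain ⟨hz0, -⟩ := hz01
        obtain ⟨hy0, hy1⟩ := hy
        have hz2' : (2+z)/3 = y/3 := hz2
        linarith
    · right
      refine ⟨(2+y)/3*3 - 2, ?_, by ring⟩
      rw [cantorSet, mem_iInter]
      intro n
      have hxn : (2+y)/3 ∈ preCantorSet (n+1) := (mem_iInter.1 hx) (n+1)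
      rw [preCantorSet_succ] at hxn
      rcases hxn with ⟨z, hz, hz2⟩ | ⟨z, hz, hz2⟩
      · exfalso
        have hz01 : z ∈ Icc (0:ℝ) 1 := pre_antitone (Nat.zero_le n) hz
        obtain ⟨hz0, hz1⟩ := hz01
        obtain ⟨hy0, hy1⟩ := hy
        have hz2' : z/3 = (2+y)/3 := hz2
        linarith
      · have hz2' : (2+z)/3 = (2+y)/3 := hz2
        have : (2+y)/3*3 - 2 = z := by rw [← hz2']; ring
        rwa [this]
  · apply union_subset
    · rintro x ⟨y, hy, rfl⟩; exact third_mem_cantorSet hy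
    · rintro x ⟨y, hy, rfl⟩; exact twothird_mem_cantorSet hy

section Mu
variable (μ : Measure ℝ) [IsProbabilityMeasure μ]
  (hμ : ∀ x ∈ Icc (0:ℝ) 1, μ (Icc 0 x) = ENNReal.ofReal (cantorFun x))
  (hsupp : μ (Icc (0:ℝ) 1) = 1)

include hsupp in
lemma mu_compl_null : μ ((Icc (0:ℝ) 1)ᶜ) = 0 := by
  rw [prob_compl_eq_one_sub measurableSet_Icc, hsupp, tsub_self]

include hμ hsupp in
lemma mu_Iic {x : ℝ} (h0 : 0 ≤ x) (h1 : x ≤ 1) :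
    μ (Iic x) = ENNReal.ofReal (cantorFun x) := by
  rw [← hμ x ⟨h0, h1⟩]
  apply le_antisymm
  · calc μ (Iic x) ≤ μ (Icc 0 x ∪ (Icc (0:ℝ) 1)ᶜ) := by
          apply measure_mono
          intro y hy
          rcases le_or_gt 0 y with h | h
          · exact Or.inl ⟨h, hy⟩
          · exact Or.inr (fun hc => absurd hc.1 (not_le.2 h))
      _ ≤ μ (Icc 0 x) + μ ((Icc (0:ℝ) 1)ᶜ) := measure_union_le _ _
      _ = μ (Icc 0 x) := by rw [mu_compl_null μ hsupp, add_zero]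
  · exact measure_mono Icc_subset_Iic_self

include hsupp in
lemma mu_Iic_neg {x : ℝ} (h : x < 0) : μ (Iic x) = 0 := by
  apply measure_mono_null _ (mu_compl_null μ hsupp)
  intro y hy hc
  exact absurd ((hc.1).trans (le_of_lt (lt_of_le_of_lt hy h))) (by simp [not_le]; nlinarith [hc.1, mem_Iic.1 hy])

include hsupp in
lemma mu_Iic_ge {x : ℝ} (h : 1 ≤ x) : μ (Iic x) = 1 := by
  apply le_antisymm prob_le_one
  rw [← hsupp]
  apply measure_mono
  intro y hy
  exact hy.2.trans h

include hμ hsupp in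
lemma mu_Ioc {a b : ℝ} (h0 : 0 ≤ a) (hab : a ≤ b) (h1 : b ≤ 1) :
    μ (Ioc a b) = ENNReal.ofReal (cantorFun b) - ENNReal.ofReal (cantorFun a) := by
  rw [← Iic_sdiff_Iic, measure_diff (Iic_subset_Iic.2 hab) nullMeasurableSet_Iic
    (measure_ne_top μ _), mu_Iic μ hμ hsupp h0 (hab.trans h1), mu_Iic μ hμ hsupp (h0.trans hab) h1]

include hμ hsupp in
lemma mu_singleton (x : ℝ) : μ {x} = 0 := by
  rcases lt_or_ge x 0 with hx | hx
  · exact measure_mono_null (by simp [singleton_subset_iff, hx.le]) (mu_Iic_neg μ hsupp hx)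
  rcases lt_or_ge 1 x with hx1 | hx1
  · apply measure_mono_null _ (mu_compl_null μ hsupp)
    intro y hy hc
    simp only [mem_singleton_iff] at hy
    subst hy
    exact absurd hc.2 (not_le.2 hx1)
  rcases eq_or_lt_of_le hx with rfl | hx0
  · apply measure_mono_null (singleton_subset_iff.2 (mem_Iic.2 le_rfl))
    rw [mu_Iic μ hμ hsupp le_rfl zero_le_one, cantorFun_zero]
    simp
  · have key : ∀ n : ℕ, μ {x} ≤ ENNReal.ofReal (2 * (2:ℝ)⁻¹^n) := by
      intro n
      set a := max (x - (3:ℝ)⁻¹^n) 0 with ha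
      have hp : (0:ℝ) < 3⁻¹^n := by positivity
      have ha0 : 0 ≤ a := le_max_right _ _
      have hax : a < x := max_lt (by linarith) hx0
      have hxa : x - a ≤ (3:ℝ)⁻¹^n := by
        have : x - (3:ℝ)⁻¹^n ≤ a := le_max_left _ _
        linarith
      have hsub : {x} ⊆ Ioc a x := by simp [singleton_subset_iff, hax]
      calc μ {x} ≤ μ (Ioc a x) := measure_mono hsub
        _ = ENNReal.ofReal (cantorFun x) - ENNReal.ofReal (cantorFun a) :=
            mu_Ioc μ hμ hsupp ha0 hax.le hx1
        _ = ENNReal.ofReal (cantorFun x - cantorFun a) :=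
            (ENNReal.ofReal_sub _ (cantorFun_nonneg ha0)).symm
        _ ≤ ENNReal.ofReal (2 * (2:ℝ)⁻¹^n) :=
            ENNReal.ofReal_le_ofReal
              (cantorFun_hold n a x ha0 hax.le hx1 hxa)
    have h0 : Filter.Tendsto (fun n : ℕ => ENNReal.ofReal (2 * (2:ℝ)⁻¹^n))
        Filter.atTop (nhds 0) := by
      rw [show (0:ℝ≥0∞) = ENNReal.ofReal 0 by simp]
      apply ENNReal.tendsto_ofReal
      simpa using (tendsto_pow_atTop_nhds_zero_of_lt_one
        (by norm_num : (0:ℝ) ≤ 2⁻¹) (by norm_num)).const_mul (2:ℝ)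
    exact le_antisymm (ge_of_tendsto' h0 key) zero_le

include hμ hsupp in
lemma mu_Icc {a b : ℝ} (h0 : 0 ≤ a) (hab : a ≤ b) (h1 : b ≤ 1) :
    μ (Icc a b) = ENNReal.ofReal (cantorFun b) - ENNReal.ofReal (cantorFun a) := by
  rw [← mu_Ioc μ hμ hsupp h0 hab h1]
  apply le_antisymm
  · calc μ (Icc a b) ≤ μ ({a} ∪ Ioc a b) := by
          apply measure_mono
          intro y hy
          rcases eq_or_lt_of_le hy.1 with rfl | h
          · exact Or.inl rfl
          · exact Or.inr ⟨h, hy.2⟩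
      _ ≤ μ {a} + μ (Ioc a b) := measure_union_le _ _
      _ = μ (Ioc a b) := by rw [mu_singleton μ hμ hsupp, zero_add]
  · exact measure_mono Ioc_subset_Icc_self

lemma J_disj : ∀ n : ℕ, Pairwise (Function.onFun Disjoint
    (fun w : Fin n → Bool => Ioc (wE w) (wE w + (3:ℝ)⁻¹^n))) := by
  intro n
  induction n with
  | zero =>
    intro w w' hne
    exact absurd (funext fun i => i.elim0) hne
  | succ n IH =>
    intro w w' hne
    have hsplit : ∀ v : Fin (n+1) → Bool, ∀ x ∈ Ioc (wE v) (wE v + (3:ℝ)⁻¹^(n+1)),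
        3*x - (cond (v 0) 2 0 : ℝ) ∈ Ioc (wE (Fin.tail v)) (wE (Fin.tail v) + (3:ℝ)⁻¹^n) := by
      intro v x hx
      obtain ⟨hx1, hx2⟩ := hx
      have hv : wE v = ((cond (v 0) 2 0 : ℝ) + wE (Fin.tail v)) / 3 := by
        conv_lhs => rw [← Fin.cons_self_tail v]
        rw [wE_cons]
      have e1 : (3:ℝ)⁻¹^(n+1) = 3⁻¹^n/3 := by rw [pow_succ]; ring
      rw [hv] at hx1 hx2
      rw [e1] at hx2
      constructor <;> [linarith; linarith]
    rcases eq_or_ne (w 0) (w' 0) with h0 | h0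
    · have htne : Fin.tail w ≠ Fin.tail w' := by
        intro h
        apply hne
        rw [← Fin.cons_self_tail w, ← Fin.cons_self_tail w', h0, h]
      have hd := IH htne
      rw [Function.onFun, Set.disjoint_left] at hd ⊢
      intro x hx hx'
      have h1 := hsplit w x hx
      have h2 := hsplit w' x hx'
      rw [h0] at h1
      exact hd h1 h2
    · rw [Function.onFun, Set.disjoint_left]
      intro x hx hx'
      have hb : ∀ v : Fin (n+1) → Bool, v 0 = false →
          ∀ y ∈ Ioc (wE v) (wE v + (3:ℝ)⁻¹^(n+1)), y ≤ 1/3 := by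
        intro v hv0 y hy
        have hv : wE v = ((0:ℝ) + wE (Fin.tail v)) / 3 := by
          conv_lhs => rw [← Fin.cons_self_tail v]
          rw [wE_cons, hv0]
          norm_num
        have ht := wE_add_le_one (Fin.tail v)
        have e1 : (3:ℝ)⁻¹^(n+1) = 3⁻¹^n/3 := by rw [pow_succ]; ring
        have := hy.2
        rw [hv, e1] at this
        linarith
      have hc : ∀ v : Fin (n+1) → Bool, v 0 = true →
          ∀ y ∈ Ioc (wE v) (wE v + (3:ℝ)⁻¹^(n+1)), 2/3 < y := by
        intro v hv0 y hy
        have hv : wE v = ((2:ℝ) + wE (Fin.tail v)) / 3 := by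
          conv_lhs => rw [← Fin.cons_self_tail v]
          rw [wE_cons, hv0]
          norm_num
        have ht := wE_nonneg (Fin.tail v)
        have := hy.1
        rw [hv] at this
        linarith
      cases hw0 : (w 0)
      · have hw'0 : w' 0 = true := by
          cases hw'0 : (w' 0)
          · exact absurd (hw0.trans hw'0.symm) h0
          · rfl
        have := hb w hw0 x hx
        have := hc w' hw'0 x hx'
        linarith
      · have hw'0 : w' 0 = false := by
          cases hw'0 : (w' 0)
          · rfl
          · exact absurd (hw0.trans hw'0.symm) h0
        have := hc w hw0 x hx
        have := hb w' hw'0 x hx'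
        linarith

include hμ hsupp in
lemma mu_pre (n : ℕ) : μ (preCantorSet n) = 1 := by
  apply le_antisymm prob_le_one
  have hsub : (⋃ w : Fin n → Bool, Ioc (wE w) (wE w + (3:ℝ)⁻¹^n)) ⊆ preCantorSet n := by
    rw [pre_eq n]
    exact iUnion_mono fun w => Ioc_subset_Icc_self
  have hmeas : ∀ w : Fin n → Bool, MeasurableSet (Ioc (wE w) (wE w + (3:ℝ)⁻¹^n)) :=
    fun w => measurableSet_Ioc
  have hval : ∀ w : Fin n → Bool,
      μ (Ioc (wE w) (wE w + (3:ℝ)⁻¹^n)) = ENNReal.ofReal ((2:ℝ)⁻¹^n) := by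
    intro w
    have hp : (0:ℝ) < 3⁻¹^n := by positivity
    have h1 := wE_add_le_one w
    have h0 := wE_nonneg w
    rw [mu_Ioc μ hμ hsupp h0 (by linarith) h1]
    obtain ⟨hfe, hfe2⟩ := cantorFun_wE w
    rw [hfe, hfe2, ← ENNReal.ofReal_sub _ (wV_nonneg w)]
    norm_num
  calc (1:ℝ≥0∞) = μ (⋃ w : Fin n → Bool, Ioc (wE w) (wE w + (3:ℝ)⁻¹^n)) := by
        rw [measure_iUnion (J_disj n) hmeas, tsum_fintype]
        rw [Finset.sum_congr rfl (fun w _ => hval w), Finset.sum_const]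
        simp only [Finset.card_univ, Fintype.card_fun, Fintype.card_bool, Fintype.card_fin]
        rw [nsmul_eq_mul]
        push_cast
        rw [ENNReal.ofReal_pow (by norm_num), ENNReal.ofReal_inv_of_pos (by norm_num)]
        rw [← mul_pow]
        norm_num [ENNReal.mul_inv_cancel]
    _ ≤ μ (preCantorSet n) := measure_mono hsub

include hμ hsupp in
lemma mu_cantorSet : μ cantorSet = 1 := by
  rw [cantorSet]
  rw [pre_antitone.measure_iInter
    (fun n => (isClosed_preCantorSet n).measurableSet.nullMeasurableSet)
    ⟨0, measure_ne_top μ _⟩]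
  simp [mu_pre μ hμ hsupp]

end Mu
lemma nnreal_third_rpow : ((3:ℝ≥0)⁻¹) ^ sc = (2:ℝ≥0)⁻¹ := by
  have h := third_rpow
  rw [← NNReal.coe_inj]
  rw [NNReal.coe_rpow]
  push_cast
  exact h

lemma H_image_third (A : Set ℝ) : μH[sc] ((· / 3) '' A) = 2⁻¹ * μH[sc] A := by
  have h : (· / 3 : ℝ → ℝ) '' A = (AffineMap.homothety (0:ℝ) (3⁻¹:ℝ)) '' A := by
    apply image_congr
    intro x _
    simp [AffineMap.homothety_apply]
    ring
  rw [h, hausdorffMeasure_homothety_image sc_pos.le 0 (by norm_num : (3⁻¹:ℝ) ≠ 0) A]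
  have hn : ‖(3⁻¹:ℝ)‖₊ = (3:ℝ≥0)⁻¹ := by
    rw [← NNReal.coe_inj]
    simp
  rw [hn, nnreal_third_rpow, ENNReal.smul_def, smul_eq_mul]
  congr 1
  simp

lemma H_image_twothird (A : Set ℝ) :
    μH[sc] ((fun x => (2 + x) / 3) '' A) = 2⁻¹ * μH[sc] A := by
  have h : (fun x : ℝ => (2 + x) / 3) '' A = (AffineMap.homothety (1:ℝ) (3⁻¹:ℝ)) '' A := by
    apply image_congr
    intro x _
    simp [AffineMap.homothety_apply]
    ring
  rw [h, hausdorffMeasure_homothety_image sc_pos.le 1 (by norm_num : (3⁻¹:ℝ) ≠ 0) A]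
  have hn : ‖(3⁻¹:ℝ)‖₊ = (3:ℝ≥0)⁻¹ := by
    rw [← NNReal.coe_inj]
    simp
  rw [hn, nnreal_third_rpow, ENNReal.smul_def, smul_eq_mul]
  congr 1
  simp

lemma rho_third {x : ℝ} (h0 : 0 ≤ x) (h1 : x ≤ 1) :
    μH[sc] (cantorSet ∩ Iic (x/3)) = 2⁻¹ * μH[sc] (cantorSet ∩ Iic x) := by
  have key : cantorSet ∩ Iic (x/3) = (· / 3) '' (cantorSet ∩ Iic x) := by
    conv_lhs => rw [cantorSet_eq_union]
    rw [union_inter_distrib_right]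
    have h2 : (fun x => (2 + x) / 3) '' cantorSet ∩ Iic (x/3) = ∅ := by
      apply eq_empty_iff_forall_notMem.2
      rintro y ⟨⟨c, hc, rfl⟩, hy⟩
      have hc0 : 0 ≤ c := (cantorSet_subset_unitInterval hc).1
      simp only [mem_Iic] at hy
      have : (2+c)/3 ≤ x/3 := hy
      linarith
    have h3 : (· / 3) '' cantorSet ∩ Iic (x/3) = (· / 3) '' (cantorSet ∩ Iic x) := by
      ext y
      simp only [mem_inter_iff, mem_image, mem_Iic]
      constructor
      · rintro ⟨⟨c, hc, rfl⟩, hy⟩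
        exact ⟨c, ⟨hc, by linarith⟩, rfl⟩
      · rintro ⟨c, ⟨hc, hcx⟩, rfl⟩
        exact ⟨⟨c, hc, rfl⟩, by linarith⟩
    rw [h2, h3, union_empty]
  rw [key, H_image_third]

lemma measurable_T1_image (A : Set ℝ) (hA : IsCompact A) :
    MeasurableSet ((fun x : ℝ => (2 + x) / 3) '' A) := by
  apply IsCompact.measurableSet
  apply hA.image
  exact (continuous_const.add continuous_id).div_const 3

lemma rho_twothird {x : ℝ} (h0 : 0 ≤ x) (h1 : x ≤ 1) :
    μH[sc] (cantorSet ∩ Iic ((2+x)/3))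
      = 2⁻¹ * μH[sc] cantorSet + 2⁻¹ * μH[sc] (cantorSet ∩ Iic x) := by
  have key : cantorSet ∩ Iic ((2+x)/3)
      = ((· / 3) '' cantorSet) ∪ ((fun x => (2 + x) / 3) '' (cantorSet ∩ Iic x)) := by
    conv_lhs => rw [cantorSet_eq_union]
    rw [union_inter_distrib_right]
    have h2 : (· / 3) '' cantorSet ∩ Iic ((2+x)/3) = (· / 3) '' cantorSet := by
      apply inter_eq_left.2
      rintro y ⟨c, hc, rfl⟩
      have hc1 : c ≤ 1 := (cantorSet_subset_unitInterval hc).2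
      simp only [mem_Iic]
      show c / 3 ≤ (2+x)/3
      linarith
    have h3 : (fun x => (2 + x) / 3) '' cantorSet ∩ Iic ((2+x)/3)
        = (fun x => (2 + x) / 3) '' (cantorSet ∩ Iic x) := by
      ext y
      simp only [mem_inter_iff, mem_image, mem_Iic]
      constructor
      · rintro ⟨⟨c, hc, rfl⟩, hy⟩
        refine ⟨c, ⟨hc, by linarith⟩, rfl⟩
      · rintro ⟨c, ⟨hc, hcx⟩, rfl⟩
        exact ⟨⟨c, hc, rfl⟩, by linarith⟩
    rw [h2, h3]
  rw [key, measure_union _ (measurable_T1_image _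
    (isCompact_cantorSet.inter_right isClosed_Iic))]
  · rw [H_image_third, H_image_twothird]
  · apply Set.disjoint_left.2
    rintro y ⟨c, hc, rfl⟩ ⟨c', ⟨hc', -⟩, hy⟩
    have h1' : c ≤ 1 := (cantorSet_subset_unitInterval hc).2
    have h2' : 0 ≤ c' := (cantorSet_subset_unitInterval hc').1
    have : (2 + c')/3 = c/3 := hy
    linarith

lemma rho_zero : μH[sc] (cantorSet ∩ Iic 0) = 0 := by
  haveI := Measure.noAtoms_hausdorff (X := ℝ) sc_pos
  apply measure_mono_null _ (measure_singleton (0:ℝ))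
  rintro y ⟨hy, hy0⟩
  have := (cantorSet_subset_unitInterval hy).1
  simp only [mem_Iic] at hy0
  simp [le_antisymm hy0 this]

lemma rho_one : cantorSet ∩ Iic 1 = cantorSet :=
  inter_eq_left.2 fun x hx => (cantorSet_subset_unitInterval hx).2

lemma ofReal_third_pow (n : ℕ) :
    ENNReal.ofReal ((3:ℝ)⁻¹^n) = ((3:ℝ≥0∞)⁻¹)^n := by
  rw [ENNReal.ofReal_pow (by norm_num)]
  congr 1
  rw [ENNReal.ofReal_inv_of_pos (by norm_num)]
  norm_num

lemma two_pow_mul_ofReal (n : ℕ) :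
    (2:ℝ≥0∞)^n * ENNReal.ofReal ((2:ℝ)⁻¹^n) = 1 := by
  rw [ENNReal.ofReal_pow (by norm_num), ENNReal.ofReal_inv_of_pos (by norm_num)]
  rw [← mul_pow]
  norm_num [ENNReal.mul_inv_cancel]

lemma H_le_one : μH[sc] cantorSet ≤ 1 := by
  have hr : Tendsto (fun n : ℕ => ((3:ℝ≥0∞)⁻¹)^n) atTop (𝓝 0) := by
    apply ENNReal.tendsto_pow_atTop_nhds_zero_of_lt_one
    rw [ENNReal.inv_lt_one]
    norm_num
  have hbound := Measure.hausdorffMeasure_le_liminf_sum sc cantorSet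
    (fun n : ℕ => ((3:ℝ≥0∞)⁻¹)^n) hr
    (fun n (w : Fin n → Bool) => Icc (wE w) (wE w + (3:ℝ)⁻¹^n))
    (Eventually.of_forall ?ht) (Eventually.of_forall ?hst)
  case ht =>
    intro n w
    rw [Real.ediam_Icc]
    rw [show wE w + (3:ℝ)⁻¹^n - wE w = (3:ℝ)⁻¹^n by ring]
    rw [ofReal_third_pow]
  case hst =>
    intro n
    rw [← pre_eq n]
    exact iInter_subset _ n
  refine hbound.trans ?_
  have hsum : ∀ n : ℕ, (∑ w : Fin n → Bool,
      Metric.ediam (Icc (wE w) (wE w + (3:ℝ)⁻¹^n)) ^ sc) = 1 := by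
    intro n
    have hd : ∀ w : Fin n → Bool,
        Metric.ediam (Icc (wE w) (wE w + (3:ℝ)⁻¹^n)) ^ sc = ENNReal.ofReal ((2:ℝ)⁻¹^n) := by
      intro w
      rw [Real.ediam_Icc, show wE w + (3:ℝ)⁻¹^n - wE w = (3:ℝ)⁻¹^n by ring]
      rw [ENNReal.ofReal_rpow_of_nonneg (by positivity) sc_pos.le, pow_third_rpow]
    rw [Finset.sum_congr rfl (fun w _ => hd w), Finset.sum_const]
    simp only [Finset.card_univ, Fintype.card_fun, Fintype.card_bool, Fintype.card_fin]
    rw [nsmul_eq_mul]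
    push_cast
    exact two_pow_mul_ofReal n
  rw [liminf_congr (Eventually.of_forall hsum)]
  simp

section Mu2
variable (μ : Measure ℝ) [IsProbabilityMeasure μ]
  (hμ : ∀ x ∈ Icc (0:ℝ) 1, μ (Icc 0 x) = ENNReal.ofReal (cantorFun x))
  (hsupp : μ (Icc (0:ℝ) 1) = 1)

include hμ hsupp in
lemma mass_bound : ∀ A : Set ℝ, EMetric.diam A ≤ 1 →
    ((8:ℝ≥0∞)⁻¹ • μ) A ≤ EMetric.diam A ^ sc := by
  intro A hA
  rcases eq_empty_or_nonempty A with rfl | ⟨x0, hx0⟩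
  · simp
  have hne : EMetric.diam A ≠ ⊤ := (hA.trans_lt (by norm_num)).ne
  set d := (EMetric.diam A).toReal with hd
  have hd0 : 0 ≤ d := ENNReal.toReal_nonneg
  have hsub : A ⊆ Icc (x0 - d) (x0 + d) := by
    intro y hy
    have hdist : dist y x0 ≤ d := Metric.dist_le_diam_of_mem' hne hy hx0
    rw [Real.dist_eq] at hdist
    have := abs_le.1 hdist
    exact ⟨by linarith [this.1], by linarith [this.2]⟩
  set a := max (x0 - d) 0 with ha
  set b := min (x0 + d) 1 with hb
  have hmono : μ A ≤ μ (Icc a b) := by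
    calc μ A ≤ μ ((Icc a b) ∪ (Icc (0:ℝ) 1)ᶜ) := by
          apply measure_mono
          intro y hy
          by_cases hy01 : y ∈ Icc (0:ℝ) 1
          · left
            have := hsub hy
            exact ⟨max_le this.1 hy01.1, le_min this.2 hy01.2⟩
          · exact Or.inr hy01
      _ ≤ μ (Icc a b) + μ ((Icc (0:ℝ) 1)ᶜ) := measure_union_le _ _
      _ = μ (Icc a b) := by rw [mu_compl_null μ hsupp, add_zero]
  have hEd : ENNReal.ofReal (d ^ sc) = EMetric.diam A ^ sc := by
    rw [← ENNReal.ofReal_rpow_of_nonneg hd0 sc_pos.le, hd, ENNReal.ofReal_toReal hne]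
  rcases lt_or_ge b a with hba | hab
  · have : Icc a b = ∅ := Icc_eq_empty (not_le.2 hba)
    rw [Measure.smul_apply, smul_eq_mul]
    calc (8:ℝ≥0∞)⁻¹ * μ A ≤ (8:ℝ≥0∞)⁻¹ * μ (Icc a b) := by gcongr
      _ = 0 := by rw [this]; simp
      _ ≤ _ := zero_le
  · have h0a : 0 ≤ a := le_max_right _ _
    have hb1 : b ≤ 1 := min_le_right _ _
    have hba2 : b - a ≤ 2 * d := by
      have h1 : b ≤ x0 + d := min_le_left _ _
      have h2 : x0 - d ≤ a := le_max_left _ _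
      linarith
    have hfb : cantorFun b - cantorFun a ≤ 8 * d ^ sc := by
      have h1 := cantorFun_holder h0a hab hb1
      have h2 : (b - a) ^ sc ≤ (2 * d) ^ sc :=
        Real.rpow_le_rpow (by linarith) hba2 sc_pos.le
      have h3 : (2 * d) ^ sc = 2 ^ sc * d ^ sc := Real.mul_rpow (by norm_num) hd0
      have h4 : (2:ℝ) ^ sc ≤ 2 := by
        calc (2:ℝ) ^ sc ≤ 2 ^ (1:ℝ) :=
          Real.rpow_le_rpow_of_exponent_le (by norm_num) sc_le_one
        _ = 2 := Real.rpow_one 2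
      have h5 : (0:ℝ) ≤ d ^ sc := Real.rpow_nonneg hd0 sc
      nlinarith
    have hmu : μ (Icc a b) ≤ ENNReal.ofReal (8 * d ^ sc) := by
      rw [mu_Icc μ hμ hsupp h0a hab hb1]
      rw [← ENNReal.ofReal_sub _ (cantorFun_nonneg h0a)]
      exact ENNReal.ofReal_le_ofReal hfb
    rw [Measure.smul_apply, smul_eq_mul]
    have final : μ A ≤ 8 * EMetric.diam A ^ sc := by
      calc μ A ≤ μ (Icc a b) := hmono
        _ ≤ ENNReal.ofReal (8 * d ^ sc) := hmu
        _ = 8 * ENNReal.ofReal (d ^ sc) := by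
            rw [ENNReal.ofReal_mul (by norm_num)]
            norm_num
        _ = 8 * EMetric.diam A ^ sc := by rw [hEd]
    calc (8:ℝ≥0∞)⁻¹ * μ A ≤ 8⁻¹ * (8 * EMetric.diam A ^ sc) := by gcongr
      _ = EMetric.diam A ^ sc := by
          rw [← mul_assoc, ENNReal.inv_mul_cancel (by norm_num) (by norm_num), one_mul]

include hμ hsupp in
lemma H_lower : (8:ℝ≥0∞)⁻¹ ≤ μH[sc] cantorSet := by
  have hle : (8:ℝ≥0∞)⁻¹ • μ ≤ μH[sc] :=
    Measure.le_hausdorffMeasure sc _ 1 one_pos (mass_bound μ hμ hsupp)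
  calc (8:ℝ≥0∞)⁻¹ = ((8:ℝ≥0∞)⁻¹ • μ) cantorSet := by
        rw [Measure.smul_apply, smul_eq_mul, mu_cantorSet μ hμ hsupp, mul_one]
    _ ≤ μH[sc] cantorSet := hle cantorSet

end Mu2
lemma ofReal_half : ENNReal.ofReal ((2:ℝ)⁻¹) = (2:ℝ≥0∞)⁻¹ := by
  rw [ENNReal.ofReal_inv_of_pos (by norm_num)]
  norm_num

lemma rho_13 : μH[sc] (cantorSet ∩ Iic (1/3)) = 2⁻¹ * μH[sc] cantorSet := by
  have h := rho_third (x := 1) zero_le_one le_rfl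
  rw [rho_one] at h
  simpa using h

lemma rho_23 : μH[sc] (cantorSet ∩ Iic (2/3)) = 2⁻¹ * μH[sc] cantorSet := by
  have h := rho_twothird (x := 0) le_rfl zero_le_one
  rw [rho_zero] at h
  norm_num at h
  exact h

lemma rho_approx : ∀ n : ℕ, ∀ x : ℝ, 0 ≤ x → x ≤ 1 →
    μH[sc] (cantorSet ∩ Iic x)
      ≤ ENNReal.ofReal (cantorFun x) * μH[sc] cantorSet + (2:ℝ≥0∞)⁻¹^n * μH[sc] cantorSet
    ∧ ENNReal.ofReal (cantorFun x) * μH[sc] cantorSet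
      ≤ μH[sc] (cantorSet ∩ Iic x) + (2:ℝ≥0∞)⁻¹^n * μH[sc] cantorSet := by
  intro n
  induction n with
  | zero =>
    intro x h0 h1
    constructor
    · calc μH[sc] (cantorSet ∩ Iic x) ≤ μH[sc] cantorSet := measure_mono inter_subset_left
        _ = (2:ℝ≥0∞)⁻¹^0 * μH[sc] cantorSet := by rw [pow_zero, one_mul]
        _ ≤ _ := le_add_self
    · calc ENNReal.ofReal (cantorFun x) * μH[sc] cantorSet
          ≤ 1 * μH[sc] cantorSet := by
            gcongr
            exact ENNReal.ofReal_le_one.2 (cantorFun_le_one x)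
        _ = (2:ℝ≥0∞)⁻¹^0 * μH[sc] cantorSet := by rw [pow_zero, one_mul]
        _ ≤ _ := le_add_self
  | succ n IH =>
    intro x h0 h1
    rcases le_or_gt x (1/3) with hx3 | hx3
    · -- x = (3x)/3
      have hy0 : (0:ℝ) ≤ 3*x := by linarith
      have hy1 : 3*x ≤ 1 := by linarith
      obtain ⟨ih1, ih2⟩ := IH (3*x) hy0 hy1
      have hρ : μH[sc] (cantorSet ∩ Iic x) = 2⁻¹ * μH[sc] (cantorSet ∩ Iic (3*x)) := by
        have := rho_third hy0 hy1
        rw [show (3*x)/3 = x by ring] at this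
        exact this
      have hτ : ENNReal.ofReal (cantorFun x) = 2⁻¹ * ENNReal.ofReal (cantorFun (3*x)) := by
        have h := cantorFun_third hy0 hy1
        rw [show (3*x)/3 = x by ring] at h
        rw [h, show cantorFun (3*x)/2 = cantorFun (3*x) * 2⁻¹ by ring,
          ENNReal.ofReal_mul' (by norm_num), ofReal_half, mul_comm]
      constructor
      · calc μH[sc] (cantorSet ∩ Iic x)
            = 2⁻¹ * μH[sc] (cantorSet ∩ Iic (3*x)) := hρ
          _ ≤ 2⁻¹ * (ENNReal.ofReal (cantorFun (3*x)) * μH[sc] cantorSet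
                + (2:ℝ≥0∞)⁻¹^n * μH[sc] cantorSet) := by gcongr
          _ = ENNReal.ofReal (cantorFun x) * μH[sc] cantorSet
                + (2:ℝ≥0∞)⁻¹^(n+1) * μH[sc] cantorSet := by rw [hτ]; ring
      · calc ENNReal.ofReal (cantorFun x) * μH[sc] cantorSet
            = 2⁻¹ * (ENNReal.ofReal (cantorFun (3*x)) * μH[sc] cantorSet) := by rw [hτ]; ring
          _ ≤ 2⁻¹ * (μH[sc] (cantorSet ∩ Iic (3*x)) + (2:ℝ≥0∞)⁻¹^n * μH[sc] cantorSet) := by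
              gcongr
          _ = μH[sc] (cantorSet ∩ Iic x) + (2:ℝ≥0∞)⁻¹^(n+1) * μH[sc] cantorSet := by
              rw [hρ]; ring
    rcases le_or_gt (2/3) x with hx23 | hx23
    · have hy0 : (0:ℝ) ≤ 3*x - 2 := by linarith
      have hy1 : 3*x - 2 ≤ 1 := by linarith
      obtain ⟨ih1, ih2⟩ := IH (3*x - 2) hy0 hy1
      have hρ : μH[sc] (cantorSet ∩ Iic x)
          = 2⁻¹ * μH[sc] cantorSet + 2⁻¹ * μH[sc] (cantorSet ∩ Iic (3*x - 2)) := by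
        have := rho_twothird hy0 hy1
        rw [show (2+(3*x-2))/3 = x by ring] at this
        exact this
      have hτ : ENNReal.ofReal (cantorFun x)
          = 2⁻¹ + 2⁻¹ * ENNReal.ofReal (cantorFun (3*x - 2)) := by
        have h := cantorFun_twothird hy0 hy1
        rw [show (2+(3*x-2))/3 = x by ring] at h
        rw [h, show (1 + cantorFun (3*x-2))/2 = 2⁻¹ + cantorFun (3*x-2) * 2⁻¹ by ring,
          ENNReal.ofReal_add (by norm_num) (mul_nonneg (cantorFun_nonneg hy0) (by norm_num)),
          ENNReal.ofReal_mul' (by norm_num), ofReal_half, mul_comm]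
      constructor
      · calc μH[sc] (cantorSet ∩ Iic x)
            = 2⁻¹ * μH[sc] cantorSet + 2⁻¹ * μH[sc] (cantorSet ∩ Iic (3*x-2)) := hρ
          _ ≤ 2⁻¹ * μH[sc] cantorSet + 2⁻¹ * (ENNReal.ofReal (cantorFun (3*x-2)) * μH[sc] cantorSet
                + (2:ℝ≥0∞)⁻¹^n * μH[sc] cantorSet) := by gcongr
          _ = ENNReal.ofReal (cantorFun x) * μH[sc] cantorSet
                + (2:ℝ≥0∞)⁻¹^(n+1) * μH[sc] cantorSet := by rw [hτ]; ring
      · calc ENNReal.ofReal (cantorFun x) * μH[sc] cantorSet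
            = 2⁻¹ * μH[sc] cantorSet
                + 2⁻¹ * (ENNReal.ofReal (cantorFun (3*x-2)) * μH[sc] cantorSet) := by
              rw [hτ]; ring
          _ ≤ 2⁻¹ * μH[sc] cantorSet
                + 2⁻¹ * (μH[sc] (cantorSet ∩ Iic (3*x-2)) + (2:ℝ≥0∞)⁻¹^n * μH[sc] cantorSet) := by
              gcongr
          _ = μH[sc] (cantorSet ∩ Iic x) + (2:ℝ≥0∞)⁻¹^(n+1) * μH[sc] cantorSet := by
              rw [hρ]; ring
    · -- middle: 1/3 < x < 2/3
      have hρ : μH[sc] (cantorSet ∩ Iic x) = 2⁻¹ * μH[sc] cantorSet := by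
        apply le_antisymm
        · rw [← rho_23]
          exact measure_mono (inter_subset_inter_right _ (Iic_subset_Iic.2 hx23.le))
        · rw [← rho_13]
          exact measure_mono (inter_subset_inter_right _ (Iic_subset_Iic.2 hx3.le))
      have hfx : cantorFun x = 1/2 := by
        apply le_antisymm
        · rw [← f23]; exact cantorFun_mono h0 hx23.le
        · rw [← f13]; exact cantorFun_mono (by norm_num) hx3.le
      have hτ : ENNReal.ofReal (cantorFun x) = 2⁻¹ := by
        rw [hfx, show (1/2 : ℝ) = 2⁻¹ by norm_num, ofReal_half]
      rw [hρ, hτ]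
      exact ⟨self_le_add_right _ _, self_le_add_right _ _⟩

lemma rho_eq {x : ℝ} (h0 : 0 ≤ x) (h1 : x ≤ 1) :
    μH[sc] (cantorSet ∩ Iic x) = ENNReal.ofReal (cantorFun x) * μH[sc] cantorSet := by
  have hfin : μH[sc] cantorSet ≠ ⊤ := (H_le_one.trans_lt (by norm_num)).ne
  have haux : ∀ a b : ℝ≥0∞, (∀ n : ℕ, a ≤ b + (2:ℝ≥0∞)⁻¹^n * μH[sc] cantorSet) →
      b ≠ ⊤ → a ≤ b := by
    intro a b hab hb
    apply ENNReal.le_of_forall_pos_le_add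
    intro ε hε _
    obtain ⟨n, hn⟩ := ENNReal.exists_inv_two_pow_lt (a := (ε:ℝ≥0∞))
      (by exact_mod_cast hε.ne')
    calc a ≤ b + (2:ℝ≥0∞)⁻¹^n * μH[sc] cantorSet := hab n
      _ ≤ b + (2:ℝ≥0∞)⁻¹^n * 1 := by gcongr; exact H_le_one
      _ = b + (2:ℝ≥0∞)⁻¹^n := by rw [mul_one]
      _ ≤ b + ε := add_le_add le_rfl hn.le
  apply le_antisymm
  · apply haux _ _ (fun n => (rho_approx n x h0 h1).1)
    exact ENNReal.mul_ne_top ENNReal.ofReal_ne_top hfin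
  · apply haux _ _ (fun n => (rho_approx n x h0 h1).2)
    exact (measure_mono inter_subset_left).trans_lt (H_le_one.trans_lt (by norm_num)) |>.ne


end Stmt14

open scoped MeasureTheory in
/-- With s = log 2 / log 3, the s-dimensional Hausdorff measure of the
middle-thirds Cantor set C is positive and finite, and the Cantor–Lebesgue measure μ
(the measure with μ([0,x]) = f_C(x)) equals the normalized restriction H^s|_C / H^s(C). -/
theorem stmt_14 (μ : Measure ℝ) [IsProbabilityMeasure μ]
    (hμ : ∀ x ∈ Icc (0:ℝ) 1, μ (Icc 0 x) = ENNReal.ofReal (cantorFun x))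
    (hsupp : μ (Icc (0:ℝ) 1) = 1) :
    0 < μH[Real.log 2 / Real.log 3] cantorSet ∧
    μH[Real.log 2 / Real.log 3] cantorSet < ⊤ ∧
    μ = (μH[Real.log 2 / Real.log 3] cantorSet)⁻¹ •
        (μH[Real.log 2 / Real.log 3]).restrict cantorSet := by
  show 0 < μH[Stmt14.sc] cantorSet ∧ μH[Stmt14.sc] cantorSet < ⊤ ∧
    μ = (μH[Stmt14.sc] cantorSet)⁻¹ • (μH[Stmt14.sc]).restrict cantorSet
  have hpos : (0:ℝ≥0∞) < μH[Stmt14.sc] cantorSet :=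
    lt_of_lt_of_le (by norm_num) (Stmt14.H_lower μ hμ hsupp)
  have hlt : μH[Stmt14.sc] cantorSet < ⊤ :=
    Stmt14.H_le_one.trans_lt (by norm_num)
  have h0 : μH[Stmt14.sc] cantorSet ≠ 0 := hpos.ne'
  have hfin : μH[Stmt14.sc] cantorSet ≠ ⊤ := hlt.ne
  refine ⟨hpos, hlt, ?_⟩
  apply Measure.ext_of_Iic
  intro a
  rw [Measure.smul_apply, Measure.restrict_apply measurableSet_Iic, smul_eq_mul]
  rcases lt_or_ge a 0 with ha | ha
  · rw [Stmt14.mu_Iic_neg μ hsupp ha]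
    have hempty : Iic a ∩ cantorSet = ∅ := by
      apply eq_empty_iff_forall_notMem.2
      rintro y ⟨hy, hyC⟩
      have := (cantorSet_subset_unitInterval hyC).1
      simp only [mem_Iic] at hy
      linarith
    rw [hempty, measure_empty, mul_zero]
  · rcases le_or_gt a 1 with ha1 | ha1
    · rw [Stmt14.mu_Iic μ hμ hsupp ha ha1, inter_comm, Stmt14.rho_eq ha ha1,
        mul_comm (ENNReal.ofReal (cantorFun a)) _, ← mul_assoc,
        ENNReal.inv_mul_cancel h0 hfin, one_mul]
    · rw [Stmt14.mu_Iic_ge μ hsupp ha1.le]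
      have hC : Iic a ∩ cantorSet = cantorSet :=
        inter_eq_right.2 fun y hy => le_trans (cantorSet_subset_unitInterval hy).2 ha1.le
      rw [hC, ENNReal.inv_mul_cancel h0 hfin]
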